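/- Assume in addition that A is abelian, i.e. ⁅a, b⁆ = 0 for all a, b ∈ A. Then for every m ∈ M, every i ≥ 1, and all a₁,…,a_i ∈ A, Φ(m)_i(a₁,…,a_i) = P([⋯[m, a₁], a₂, …, a_i]) (the iterated bracket with m innermost), and for every K-linear derivation D of M with D(L) ⊆ L, Φ(D)_i(a₁,…,a_i) = P([⋯[D a₁, a₂], …, a_i]). (Ungraded instance of Proposition 5.3 of the paper: when A is abelian the higher derived brackets reduce to Voronov's higher derived brackets.) -/

import Mathlib

/-!
Nonabelian higher derived brackets (Bandiera), Proposition 5.3, ungraded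
instance: if `A = im P` is abelian then the higher derived brackets reduce to
Voronov's higher derived brackets:
`Φ(m)_i(a₁,…,a_i) = P([⋯[m, a₁], a₂, …, a_i])` and
`Φ(D)_i(a₁,…,a_i) = P([⋯[D a₁, a₂], …, a_i])` for `i ≥ 1`.
-/

section HigherDerivedBrackets

variable {K : Type*} [Field K] [CharZero K]
variable {M : Type*} [LieRing M] [LieAlgebra K M]

/-- Iterated Lie bracket `[⋯[x, y₁], …, y_r]`, bracketing from the left. -/
def nestBr {M : Type*} [LieRing M] (x : M) (l : List M) : M :=
  l.foldl (fun y z => ⁅y, z⁆) x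

/-- `[⋯[D a₁, a₂], …, a_r]`: the iterated bracket with `D` applied to the head. -/
def dnestBr {M : Type*} [LieRing M] (D : M → M) : List M → M
  | [] => 0
  | x :: xs => nestBr (D x) xs

/-- The list `(a_{σ(1)}, …, a_{σ(i)})` obtained by permuting the entries of `l`. -/
def permList {M : Type*} (l : List M) (σ : Equiv.Perm (Fin l.length)) : List M :=
  List.ofFn (fun j => l.get (σ j))

/-- The Bernoulli coefficient `B_{i-k}/(k!(i-k)!)`, viewed in `K`. -/
noncomputable def coefB (K : Type*) [Field K] [CharZero K] (i k : ℕ) : K :=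
  ((bernoulli (i - k) / ((Nat.factorial k : ℚ) * (Nat.factorial (i - k) : ℚ)) : ℚ) : K)

/-- The higher derived brackets `Φ(m)_i : A^i → A` associated to an element `m ∈ M`:
`Φ(m)_i(a₁,…,a_i) = Σ_{σ ∈ S_i} Σ_{k=0}^{i} (B_{i−k}/(k!(i−k)!))
  [⋯[P([⋯[m, a_{σ(1)}], …, a_{σ(k)}]), a_{σ(k+1)}], …, a_{σ(i)}]`,
with `Φ(m)_0 = P m` (the value on the empty list). -/
noncomputable def PhiElt (P : M →ₗ[K] M) (m : M) (l : List M) : M :=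
  ∑ σ : Equiv.Perm (Fin l.length), ∑ k ∈ Finset.range (l.length + 1),
    coefB K l.length k •
      nestBr (P (nestBr m ((permList l σ).take k))) ((permList l σ).drop k)

/-- The higher derived brackets `Φ(D)_i : A^i → A` associated to a derivation `D`:
`Φ(D)_i(a₁,…,a_i) = Σ_{σ ∈ S_i} Σ_{k=1}^{i} (B_{i−k}/(k!(i−k)!))
  [⋯[P([⋯[D a_{σ(1)}, a_{σ(2)}], …, a_{σ(k)}]), a_{σ(k+1)}], …, a_{σ(i)}]`,
with `Φ(D)_0 = 0` (the value on the empty list). -/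
noncomputable def PhiDer (P : M →ₗ[K] M) (D : M → M) (l : List M) : M :=
  ∑ σ : Equiv.Perm (Fin l.length), ∑ k ∈ Finset.Icc 1 l.length,
    coefB K l.length k •
      nestBr (P (dnestBr D ((permList l σ).take k))) ((permList l σ).drop k)

/-- The Nijenhuis–Richardson bracket of two families `q, r : List M → M` of
symmetric multilinear maps: its `i`-th component is
`[q,r]_i(a₁,…,a_i) = Σ_{k=0}^{i} (1/(k!(i−k)!)) Σ_{σ ∈ S_i}
  ( q_{i−k+1}(r_k(a_{σ(1)},…,a_{σ(k)}), a_{σ(k+1)},…,a_{σ(i)})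
  − r_{i−k+1}(q_k(a_{σ(1)},…,a_{σ(k)}), a_{σ(k+1)},…,a_{σ(i)}) )`. -/
noncomputable def nrBracket (K : Type*) [Field K] [CharZero K] {M : Type*}
    [LieRing M] [LieAlgebra K M] (q r : List M → M) (l : List M) : M :=
  ∑ k ∈ Finset.range (l.length + 1),
    ((1 / ((Nat.factorial k : ℚ) * (Nat.factorial (l.length - k) : ℚ)) : ℚ) : K) •
      ∑ σ : Equiv.Perm (Fin l.length),
        (q (r ((permList l σ).take k) :: (permList l σ).drop k)
          - r (q ((permList l σ).take k) :: (permList l σ).drop k))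


section AuxLemmas

variable {K : Type*} [Field K] [CharZero K]
variable {M : Type*} [LieRing M] [LieAlgebra K M]

lemma nestBr_nil (x : M) : nestBr x [] = x := rfl

lemma nestBr_cons (x a : M) (l : List M) : nestBr x (a :: l) = nestBr ⁅x, a⁆ l := rfl

lemma nestBr_zero (l : List M) : nestBr (0 : M) l = 0 := by
  induction l with
  | nil => rfl
  | cons a t ih => rw [nestBr_cons, zero_lie]; exact ih

lemma lie_lie_comm {x a b : M} (h : ⁅a, b⁆ = (0 : M)) : ⁅⁅x, a⁆, b⁆ = ⁅⁅x, b⁆, a⁆ := by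
  have h2 : ⁅⁅x, a⁆, b⁆ + ⁅a, ⁅x, b⁆⁆ = 0 := by rw [← leibniz_lie, h, lie_zero]
  have h3 : ⁅a, ⁅x, b⁆⁆ = -⁅⁅x, b⁆, a⁆ := by rw [← lie_skew]
  rw [h3] at h2
  linear_combination (norm := module) h2

lemma nestBr_perm (C : M → Prop) (hC : ∀ a b : M, C a → C b → ⁅a, b⁆ = 0)
    {l₁ l₂ : List M} (h : l₁.Perm l₂) :
    (∀ a ∈ l₁, C a) → ∀ x : M, nestBr x l₁ = nestBr x l₂ := by
  induction h with
  | nil => intro _ _; rfl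
  | cons a h ih =>
      intro hl x
      rw [nestBr_cons, nestBr_cons]
      exact ih (fun b hb => hl b (List.mem_cons_of_mem _ hb)) _
  | swap a b t =>
      intro hl x
      rw [nestBr_cons, nestBr_cons, nestBr_cons, nestBr_cons]
      have hab : ⁅a, b⁆ = (0 : M) :=
        hC a b (hl a (by simp)) (hl b (by simp))
      rw [lie_lie_comm hab]
  | trans h₁ h₂ ih₁ ih₂ =>
      intro hl x
      exact (ih₁ hl x).trans (ih₂ (fun a ha => hl a (h₁.mem_iff.mpr ha)) x)

lemma dnestBr_perm (C : M → Prop) (hC : ∀ a b : M, C a → C b → ⁅a, b⁆ = 0)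
    (D : M → M) (hD0 : D 0 = 0)
    (hDder : ∀ x y : M, D ⁅x, y⁆ = ⁅D x, y⁆ + ⁅x, D y⁆)
    {l₁ l₂ : List M} (h : l₁.Perm l₂) :
    (∀ a ∈ l₁, C a) → dnestBr D l₁ = dnestBr D l₂ := by
  induction h with
  | nil => intro _; rfl
  | cons a h ih =>
      intro hl
      show nestBr (D a) _ = nestBr (D a) _
      exact nestBr_perm C hC h (fun b hb => hl b (List.mem_cons_of_mem _ hb)) _
  | swap a b t =>
      intro hl
      show nestBr (D b) (a :: t) = nestBr (D a) (b :: t)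
      rw [nestBr_cons, nestBr_cons]
      have hba : ⁅b, a⁆ = (0 : M) :=
        hC b a (hl b (by simp)) (hl a (by simp))
      have h0 : (0 : M) = ⁅D b, a⁆ + ⁅b, D a⁆ := by rw [← hDder, hba, hD0]
      have h3 : ⁅b, D a⁆ = -⁅D a, b⁆ := by rw [← lie_skew]
      rw [h3] at h0
      have : ⁅D b, a⁆ = ⁅D a, b⁆ := by linear_combination (norm := module) -h0
      rw [this]
  | trans h₁ h₂ ih₁ ih₂ =>
      intro hl
      exact (ih₁ hl).trans (ih₂ (fun a ha => hl a (h₁.mem_iff.mpr ha)))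

lemma nestBr_range_zero (P : M →ₗ[K] M)
    (hAab : ∀ x y : M, x ∈ LinearMap.range P → y ∈ LinearMap.range P → ⁅x, y⁆ = (0 : M))
    {x : M} (hx : x ∈ LinearMap.range P) {l : List M}
    (hl : ∀ a ∈ l, a ∈ LinearMap.range P) (hne : l ≠ []) : nestBr x l = 0 := by
  cases l with
  | nil => exact absurd rfl hne
  | cons a t =>
      rw [nestBr_cons, hAab x a hx (hl a (by simp)), nestBr_zero]

end AuxLemmas

/-- Ungraded instance of Proposition 5.3: when `A` is abelian
the higher derived brackets reduce to Voronov's higher derived brackets. -/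
theorem statement3 (P : M →ₗ[K] M) (hP : ∀ x : M, P (P x) = P x)
    (hL : ∀ x y : M, P x = 0 → P y = 0 → P ⁅x, y⁆ = 0)
    (hAab : ∀ x y : M, x ∈ LinearMap.range P → y ∈ LinearMap.range P →
      ⁅x, y⁆ = (0 : M))
    (m : M) (D : M → M) (hDlin : IsLinearMap K D)
    (hDder : ∀ x y : M, D ⁅x, y⁆ = ⁅D x, y⁆ + ⁅x, D y⁆)
    (hDL : ∀ x : M, P x = 0 → P (D x) = 0)
    (l : List M) (hne : l ≠ []) (hl : ∀ x ∈ l, x ∈ LinearMap.range P) :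
    PhiElt P m l = P (nestBr m l) ∧ PhiDer P D l = P (dnestBr D l) := by
  have hnpos : 0 < l.length := List.length_pos_iff.mpr hne
  set n := l.length with hn
  have hperm : ∀ σ : Equiv.Perm (Fin n), (permList l σ).Perm l := fun σ => by
    have h := Equiv.Perm.ofFn_comp_perm σ l.get
    rw [List.ofFn_get] at h
    exact h
  have hlen : ∀ σ : Equiv.Perm (Fin n), (permList l σ).length = n := fun σ => by
    simp [permList, hn]
  have hmem : ∀ σ : Equiv.Perm (Fin n), ∀ a ∈ permList l σ, a ∈ LinearMap.range P :=
    fun σ a ha => hl a ((hperm σ).subset ha)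
  have htake : ∀ σ : Equiv.Perm (Fin n), (permList l σ).take n = permList l σ := fun σ =>
    List.take_of_length_le (le_of_eq (hlen σ))
  have hdrop : ∀ σ : Equiv.Perm (Fin n), (permList l σ).drop n = [] := fun σ =>
    List.drop_eq_nil_of_le (le_of_eq (hlen σ))
  have hdropne : ∀ σ : Equiv.Perm (Fin n), ∀ k < n, (permList l σ).drop k ≠ [] := by
    intro σ k hk
    intro hcon
    have h1 : ((permList l σ).drop k).length = n - k := by rw [List.length_drop, hlen σ]
    rw [hcon] at h1
    simp only [List.length_nil] at h1
    omega
  have hcoef : coefB K n n = (((1 : ℚ) / (Nat.factorial n : ℚ) : ℚ) : K) := by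
    simp [coefB, Nat.sub_self]
  have hcard : (Finset.univ : Finset (Equiv.Perm (Fin n))).card = Nat.factorial n := by
    simp [Fintype.card_perm]
  have hfinal : ∀ x : M,
      (∑ _σ : Equiv.Perm (Fin n), (((1 : ℚ) / (Nat.factorial n : ℚ) : ℚ) : K) • x) = x := by
    intro x
    rw [Finset.sum_const, hcard, ← Nat.cast_smul_eq_nsmul K, smul_smul]
    have hne0 : (Nat.factorial n : K) ≠ 0 := by
      exact_mod_cast Nat.cast_ne_zero.mpr (Nat.factorial_ne_zero n)
    have : (Nat.factorial n : K) * (((1 : ℚ) / (Nat.factorial n : ℚ) : ℚ) : K) = 1 := by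
      push_cast
      field_simp
    rw [this, one_smul]
  constructor
  · rw [PhiElt]
    have hterm : ∀ σ : Equiv.Perm (Fin n),
        (∑ k ∈ Finset.range (n + 1),
          coefB K n k •
            nestBr (P (nestBr m ((permList l σ).take k))) ((permList l σ).drop k))
        = (((1 : ℚ) / (Nat.factorial n : ℚ) : ℚ) : K) • P (nestBr m l) := by
      intro σ
      rw [Finset.sum_eq_single_of_mem n (Finset.self_mem_range_succ n)]
      · rw [htake σ, hdrop σ, nestBr_nil, hcoef]
        congr 2
        exact (nestBr_perm (· ∈ LinearMap.range P) hAab (hperm σ) (hmem σ) m)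
      · intro k hk hkn
        have hklt : k < n := lt_of_le_of_ne (Nat.lt_succ_iff.mp (Finset.mem_range.mp hk)) hkn
        rw [nestBr_range_zero P hAab ⟨_, rfl⟩
          (fun a ha => hmem σ a (List.drop_subset _ _ ha)) (hdropne σ k hklt), smul_zero]
    rw [Finset.sum_congr rfl (fun σ _ => hterm σ)]
    exact hfinal _
  · rw [PhiDer]
    have hD0 : D 0 = 0 := hDlin.map_zero
    have hterm : ∀ σ : Equiv.Perm (Fin n),
        (∑ k ∈ Finset.Icc 1 n,
          coefB K n k •
            nestBr (P (dnestBr D ((permList l σ).take k))) ((permList l σ).drop k))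
        = (((1 : ℚ) / (Nat.factorial n : ℚ) : ℚ) : K) • P (dnestBr D l) := by
      intro σ
      rw [Finset.sum_eq_single_of_mem n (Finset.mem_Icc.mpr ⟨hnpos, le_refl n⟩)]
      · rw [htake σ, hdrop σ, nestBr_nil, hcoef]
        congr 2
        exact dnestBr_perm (· ∈ LinearMap.range P) hAab D hD0 hDder (hperm σ) (hmem σ)
      · intro k hk hkn
        have hklt : k < n := lt_of_le_of_ne (Finset.mem_Icc.mp hk).2 hkn
        rw [nestBr_range_zero P hAab ⟨_, rfl⟩
          (fun a ha => hmem σ a (List.drop_subset _ _ ha)) (hdropne σ k hklt), smul_zero]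
    rw [Finset.sum_congr rfl (fun σ _ => hterm σ)]
    exact hfinal _

end HigherDerivedBrackets
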